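/- Let D := {f ∈ Δ_{2,max} : lim_{x→±1}(1−x²)f′(x) = 0 and lim_{x→±1}((1−x²)²f″(x))′ = 0} and D(S) := {f ∈ Δ_{2,max} : lim_{x→±1}[f,1]₂(x) = 0 and lim_{x→±1}[f,x]₂(x) = 0}. Then D = D(S). -/

import Mathlib

open MeasureTheory Set Filter

noncomputable section

/-- `f` is locally absolutely continuous on `(-1,1)` with a.e. derivative `f'`,
expressed via the fundamental theorem of calculus. -/
def LocACOn (f f' : ℝ → ℂ) : Prop :=
  ∀ x ∈ Ioo (-1:ℝ) 1, ∀ y ∈ Ioo (-1:ℝ) 1,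
    IntervalIntegrable f' volume x y ∧ f y - f x = ∫ t in x..y, f' t

/-- membership in `L²(-1,1)` -/
def L2I (g : ℝ → ℂ) : Prop :=
  MemLp g 2 (volume.restrict (Ioo (-1:ℝ) 1))

/-- the Legendre expression `ℓ[f] = -((1-x²)f′)′ = -(1-x²)f″ + 2x f′`. -/
def leg (f1 f2 : ℝ → ℂ) (x : ℝ) : ℂ :=
  ((2*x : ℝ) : ℂ) * f1 x - ((1 - x^2 : ℝ) : ℂ) * f2 x

/-- the derivative `(ℓ[f])′ = 2f′ + 4x f″ - (1-x²)f‴`. -/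
def legD (f1 f2 f3 : ℝ → ℂ) (x : ℝ) : ℂ :=
  (2 : ℂ) * f1 x + ((4*x : ℝ) : ℂ) * f2 x - ((1 - x^2 : ℝ) : ℂ) * f3 x

/-- the second derivative `(ℓ[f])″ = 6f″ + 6x f‴ - (1-x²)f⁗`. -/
def legDD (f2 f3 f4 : ℝ → ℂ) (x : ℝ) : ℂ :=
  (6 : ℂ) * f2 x + ((6*x : ℝ) : ℂ) * f3 x - ((1 - x^2 : ℝ) : ℂ) * f4 x

/-- `ℓ²[f] = ((1-x²)²f″)″ - 2((1-x²)f′)′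
           = (1-x²)²f⁗ - 8x(1-x²)f‴ + (14x²-6)f″ + 4x f′`. -/
def legSq (f1 f2 f3 f4 : ℝ → ℂ) (x : ℝ) : ℂ :=
  (((1 - x^2)^2 : ℝ) : ℂ) * f4 x - ((8*x*(1 - x^2) : ℝ) : ℂ) * f3 x
    + ((14*x^2 - 6 : ℝ) : ℂ) * f2 x + ((4*x : ℝ) : ℂ) * f1 x

/-- `((1-x²)²f″)′ = (1-x²)²f‴ - 4x(1-x²)f″`. -/
def sqTermD (f2 f3 : ℝ → ℂ) (x : ℝ) : ℂ :=
  (((1 - x^2)^2 : ℝ) : ℂ) * f3 x - ((4*x*(1 - x^2) : ℝ) : ℂ) * f2 x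

/-- `[f,1]₂(x) = ((1-x²)²f″)′ - 2(1-x²)f′`. -/
def bket1 (f1 f2 f3 : ℝ → ℂ) (x : ℝ) : ℂ :=
  sqTermD f2 f3 x - ((2*(1 - x^2) : ℝ) : ℂ) * f1 x

/-- `[f,x]₂(x) = x[f,1]₂(x) - (1-x²)²f″ + 2(1-x²)f`. -/
def bketX (f f1 f2 f3 : ℝ → ℂ) (x : ℝ) : ℂ :=
  (x : ℂ) * bket1 f1 f2 f3 x - (((1 - x^2)^2 : ℝ) : ℂ) * f2 x
    + ((2*(1 - x^2) : ℝ) : ℂ) * f x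

/-- the maximal domain `Δ_{2,max}` of `ℓ²` in `L²(-1,1)`:
`f, f′, f″, f‴` locally absolutely continuous and `f, ℓ²[f] ∈ L²(-1,1)`. -/
def Delta2Max (f f1 f2 f3 f4 : ℝ → ℂ) : Prop :=
  LocACOn f f1 ∧ LocACOn f1 f2 ∧ LocACOn f2 f3 ∧ LocACOn f3 f4 ∧
    L2I f ∧ L2I (legSq f1 f2 f3 f4)

/-- the filter `x → 1⁻` from within `(-1,1)`. -/
def atOne : Filter ℝ := nhdsWithin 1 (Ioo (-1:ℝ) 1)

/-- the filter `x → -1⁺` from within `(-1,1)`. -/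
def atNegOne : Filter ℝ := nhdsWithin (-1) (Ioo (-1:ℝ) 1)

/-- the GKN domain `D(S)`. -/
def DS (f f1 f2 f3 f4 : ℝ → ℂ) : Prop :=
  Delta2Max f f1 f2 f3 f4 ∧
  Tendsto (bket1 f1 f2 f3) atOne (nhds 0) ∧
  Tendsto (bket1 f1 f2 f3) atNegOne (nhds 0) ∧
  Tendsto (bketX f f1 f2 f3) atOne (nhds 0) ∧
  Tendsto (bketX f f1 f2 f3) atNegOne (nhds 0)

/-- the maximal domain `Δ_{1,max}` of `ℓ` in `L²(-1,1)`. -/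
def Delta1Max (f f1 f2 : ℝ → ℂ) : Prop :=
  LocACOn f f1 ∧ LocACOn f1 f2 ∧ L2I f ∧ L2I (leg f1 f2)

/-- the domain `D(A)` of the Legendre polynomials operator. -/
def DA (f f1 f2 : ℝ → ℂ) : Prop :=
  Delta1Max f f1 f2 ∧
  Tendsto (fun x => ((1 - x^2 : ℝ) : ℂ) * f1 x) atOne (nhds 0) ∧
  Tendsto (fun x => ((1 - x^2 : ℝ) : ℂ) * f1 x) atNegOne (nhds 0)

/-- the algebraic domain `D(A²) = {f ∈ D(A) : ℓ[f] ∈ D(A)}`. -/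
def DA2 (f f1 f2 f3 f4 : ℝ → ℂ) : Prop :=
  DA f f1 f2 ∧ DA (leg f1 f2) (legD f1 f2 f3) (legDD f2 f3 f4)

/-- the GKN-like domain `D`: `f ∈ Δ_{2,max}` with the non-GKN boundary conditions
`lim_{x→±1} (1-x²)f′(x) = 0` and `lim_{x→±1} ((1-x²)²f″(x))′ = 0`. -/
def DDom (f f1 f2 f3 f4 : ℝ → ℂ) : Prop :=
  Delta2Max f f1 f2 f3 f4 ∧
  Tendsto (fun x => ((1 - x^2 : ℝ) : ℂ) * f1 x) atOne (nhds 0) ∧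
  Tendsto (fun x => ((1 - x^2 : ℝ) : ℂ) * f1 x) atNegOne (nhds 0) ∧
  Tendsto (sqTermD f2 f3) atOne (nhds 0) ∧
  Tendsto (sqTermD f2 f3) atNegOne (nhds 0)

lemma eventually_Ioo_atOne {b : ℝ} (hb : b < 1) : ∀ᶠ x in atOne, x ∈ Ioo b 1 := by
  have h1 : ∀ᶠ x in atOne, x ∈ Ioo (-1:ℝ) 1 := eventually_mem_nhdsWithin
  have h2 : ∀ᶠ x in atOne, b < x :=
    eventually_nhdsWithin_of_eventually_nhds (eventually_gt_nhds hb)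
  filter_upwards [h1, h2] with x hx hbx
  exact ⟨hbx, hx.2⟩

lemma exists_Ioo_of_eventually {p : ℝ → Prop} (h : ∀ᶠ x in atOne, p x) :
    ∃ b : ℝ, 0 ≤ b ∧ b < 1 ∧ ∀ x ∈ Ioo b 1, p x := by
  rw [atOne, eventually_nhdsWithin_iff] at h
  rcases Metric.eventually_nhds_iff.mp h with ⟨δ, hδ, hball⟩
  refine ⟨max (1 - δ) 0, le_max_right _ _, max_lt (by linarith) one_pos, ?_⟩
  intro x hx
  have hx0 : 0 < x := lt_of_le_of_lt (le_max_right _ _) hx.1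
  have hx1 : 1 - δ < x := lt_of_le_of_lt (le_max_left _ _) hx.1
  have hd : dist x 1 < δ := by
    rw [Real.dist_eq, abs_of_nonpos (by linarith [hx.2])]
    linarith
  exact hball hd ⟨by linarith, hx.2⟩

lemma tendsto_atOne_of_bound (g : ℝ → ℂ)
    (H : ∀ ε : ℝ, 0 < ε → ∃ b c : ℝ, b < 1 ∧ ∀ x ∈ Ioo b 1, ‖g x‖ ≤ (1 - x^2) * c + ε) :
    Tendsto g atOne (nhds 0) := by
  rw [NormedAddCommGroup.tendsto_nhds_zero]
  intro ε hε
  obtain ⟨b, c, hb1, hbd⟩ := H (ε/2) (by linarith)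
  have h1 : Tendsto (fun x : ℝ => (1 - x^2) * c) atOne (nhds 0) := by
    have h : Tendsto (fun x : ℝ => (1 - x^2) * c) (nhds 1) (nhds ((1 - (1:ℝ)^2) * c)) := by
      apply Continuous.tendsto; continuity
    simpa [atOne] using h.mono_left nhdsWithin_le_nhds
  have h2 : ∀ᶠ x in atOne, (1 - x^2) * c < ε/2 :=
    h1.eventually (eventually_lt_nhds (by linarith))
  filter_upwards [h2, eventually_Ioo_atOne hb1] with x hx2 hxm
  calc ‖g x‖ ≤ (1 - x^2) * c + ε/2 := hbd x hxm
    _ < ε/2 + ε/2 := by linarith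
    _ = ε := by ring

/-! ### calculus estimates -/

lemma integral_inv_one_sub_sq {b x : ℝ} (hbx : b ≤ x) (hx : x < 1) :
    ∫ t in b..x, ((1-t)^2)⁻¹ = (1-x)⁻¹ - (1-b)⁻¹ := by
  have h : ∀ t ∈ uIcc b x, HasDerivAt (fun t : ℝ => (1-t)⁻¹) (((1-t)^2)⁻¹) t := by
    intro t ht
    rw [uIcc_of_le hbx] at ht
    have h1 : (1:ℝ) - t ≠ 0 := by have := ht.2; intro h'; nlinarith
    have h2 : HasDerivAt (fun t : ℝ => 1 - t) (-1) t := by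
      simpa using (hasDerivAt_id t).const_sub 1
    have h3 := h2.inv h1
    exact h3.congr_deriv (by simp)
  have hcont : ContinuousOn (fun t : ℝ => ((1-t)^2)⁻¹) (uIcc b x) := by
    apply ContinuousOn.inv₀
    · fun_prop
    · intro t ht
      rw [uIcc_of_le hbx] at ht
      have := ht.2
      intro h'; nlinarith
  rw [intervalIntegral.integral_eq_sub_of_hasDerivAt h (hcont.intervalIntegrable)]

lemma integral_inv_one_sub {b x : ℝ} (hbx : b ≤ x) (hx : x < 1) :
    ∫ t in b..x, (1-t)⁻¹ = Real.log (1-b) - Real.log (1-x) := by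
  have h : ∀ t ∈ uIcc b x, HasDerivAt (fun t : ℝ => -Real.log (1-t)) ((1-t)⁻¹) t := by
    intro t ht
    rw [uIcc_of_le hbx] at ht
    have h1 : (1:ℝ) - t ≠ 0 := by have := ht.2; intro h'; nlinarith
    have h2 : HasDerivAt (fun t : ℝ => 1 - t) (-1) t := by
      simpa using (hasDerivAt_id t).const_sub 1
    have h3 := (h2.log h1).neg
    exact h3.congr_deriv (by ring)
  have hcont : ContinuousOn (fun t : ℝ => (1-t)⁻¹) (uIcc b x) := by
    apply ContinuousOn.inv₀
    · fun_prop
    · intro t ht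
      rw [uIcc_of_le hbx] at ht
      have := ht.2
      intro h'; nlinarith
  rw [intervalIntegral.integral_eq_sub_of_hasDerivAt h (hcont.intervalIntegrable)]
  ring

lemma neg_mul_log_le_one {s : ℝ} (hs : 0 < s) (hs1 : s ≤ 1) : s * (-Real.log s) ≤ 1 := by
  have h1 : Real.log s⁻¹ ≤ s⁻¹ - 1 := Real.log_le_sub_one_of_pos (by positivity)
  rw [Real.log_inv] at h1
  have h2 : -Real.log s ≤ s⁻¹ := by linarith
  calc s * (-Real.log s) ≤ s * s⁻¹ := by
        exact mul_le_mul_of_nonneg_left h2 hs.le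
    _ = 1 := mul_inv_cancel₀ hs.ne'

/-- upper estimate A -/

lemma estA {b x : ℝ} (hb : 0 ≤ b) (hbx : b ≤ x) (hx : x < 1) :
    (1 - x^2) * ∫ t in b..x, ((1-t)^2)⁻¹ ≤ 2 := by
  rw [integral_inv_one_sub_sq hbx hx]
  have h1 : 0 < 1 - x := by linarith
  have h2 : 0 < 1 - b := by linarith
  have h3 : (1:ℝ)-x ≤ 1 - b := by linarith
  have h4 : (1-x)⁻¹ - (1-b)⁻¹ ≤ (1-x)⁻¹ := by
    have : 0 ≤ (1-b)⁻¹ := by positivity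
    linarith
  have h5 : (0:ℝ) ≤ 1 - x^2 := by nlinarith
  calc (1 - x^2) * ((1-x)⁻¹ - (1-b)⁻¹) ≤ (1 - x^2) * (1-x)⁻¹ :=
        mul_le_mul_of_nonneg_left h4 h5
    _ = 1 + x := by field_simp; ring
    _ ≤ 2 := by linarith

/-- upper estimate B -/

lemma estB {b x : ℝ} (hb : 0 ≤ b) (hbx : b ≤ x) (hx : x < 1) :
    (1 - x^2) * ∫ t in b..x, (1-t)⁻¹ ≤ 2 := by
  rw [integral_inv_one_sub hbx hx]
  have h1 : 0 < 1 - x := by linarith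
  have h2 : 0 < 1 - b := by linarith
  have hlb : Real.log (1-b) ≤ 0 := Real.log_nonpos (by linarith) (by linarith)
  have hmono : Real.log (1-x) ≤ Real.log (1-b) := Real.log_le_log h1 (by linarith)
  have h5 : (0:ℝ) ≤ 1 - x^2 := by nlinarith
  have h6 : 1 - x^2 ≤ 2*(1-x) := by nlinarith
  have h7 : Real.log (1-b) - Real.log (1-x) ≤ -Real.log (1-x) := by linarith
  have key : (1-x) * (-Real.log (1-x)) ≤ 1 := neg_mul_log_le_one h1 (by linarith)
  have h8 : 0 ≤ Real.log (1-b) - Real.log (1-x) := by linarith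
  calc (1 - x^2) * (Real.log (1-b) - Real.log (1-x))
      ≤ 2*(1-x) * (Real.log (1-b) - Real.log (1-x)) := mul_le_mul_of_nonneg_right h6 h8
    _ ≤ 2*(1-x) * (-Real.log (1-x)) := by
        apply mul_le_mul_of_nonneg_left h7; linarith
    _ = 2 * ((1-x) * (-Real.log (1-x))) := by ring
    _ ≤ 2 := by linarith

/-- lower estimate -/

lemma estLower {b x : ℝ} (hb : 0 ≤ b) (hbx : b ≤ x) (hx : x < 1)
    (hclose : 1 - x ≤ (1-b)/2) :
    (1:ℝ)/8 ≤ (1 - x^2) * ∫ t in b..x, (((1-t^2)^2)⁻¹ : ℝ) := by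
  have h1 : 0 < 1 - x := by linarith
  have h2 : 0 < 1 - b := by linarith
  have hmono : ∫ t in b..x, ((4:ℝ)⁻¹ * ((1-t)^2)⁻¹) ≤ ∫ t in b..x, (((1-t^2)^2)⁻¹:ℝ) := by
    apply intervalIntegral.integral_mono_on hbx
    · apply ContinuousOn.intervalIntegrable
      apply ContinuousOn.mul continuousOn_const
      apply ContinuousOn.inv₀ (by fun_prop)
      intro t ht
      rw [uIcc_of_le hbx] at ht
      have := ht.2; intro h'; nlinarith
    · apply ContinuousOn.intervalIntegrable
      apply ContinuousOn.inv₀ (by fun_prop)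
      intro t ht
      rw [uIcc_of_le hbx] at ht
      have h1t : t ≤ x := ht.2
      have h0t : b ≤ t := ht.1
      have ht2 : t^2 < 1 := by nlinarith
      intro h'; nlinarith
    · intro t ht
      have h0t : 0 ≤ t := le_trans hb ht.1
      have h1t : t < 1 := lt_of_le_of_lt ht.2 hx
      have ht2 : 0 < 1 - t^2 := by nlinarith
      have hB : 0 < (1-t^2)^2 := by positivity
      have hfac : (0:ℝ) ≤ (1-t)^2 * ((1-t)*(3+t)) :=
        mul_nonneg (sq_nonneg _) (mul_nonneg (by linarith) (by linarith))
      have hle : (1-t^2)^2 ≤ 4*((1-t)^2) := by nlinarith [hfac]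
      have hi := inv_anti₀ hB hle
      calc (4:ℝ)⁻¹ * ((1-t)^2)⁻¹ = (4*(1-t)^2)⁻¹ := by rw [mul_inv]
        _ ≤ ((1-t^2)^2)⁻¹ := hi
  have hcalc : ∫ t in b..x, ((4:ℝ)⁻¹ * ((1-t)^2)⁻¹) = 4⁻¹ * ((1-x)⁻¹ - (1-b)⁻¹) := by
    rw [intervalIntegral.integral_const_mul, integral_inv_one_sub_sq hbx hx]
  have hpos : 0 ≤ ∫ t in b..x, (((1-t^2)^2)⁻¹:ℝ) := by
    apply intervalIntegral.integral_nonneg hbx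
    intro t ht; positivity
  have e1 : (1-x) * (4⁻¹*((1-x)⁻¹-(1-b)⁻¹)) = 4⁻¹ - (1-x)/(4*(1-b)) := by
    field_simp
  have e2 : (1-x)/(4*(1-b)) ≤ 1/8 := by
    rw [div_le_iff₀ (by linarith)]; linarith
  have e3 : (1:ℝ)/8 ≤ (1-x) * (4⁻¹*((1-x)⁻¹-(1-b)⁻¹)) := by
    rw [e1]; linarith
  have e4 : (1-x) * (4⁻¹*((1-x)⁻¹-(1-b)⁻¹)) ≤ (1-x) * ∫ t in b..x, (((1-t^2)^2)⁻¹:ℝ) := by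
    apply mul_le_mul_of_nonneg_left _ h1.le
    rw [← hcalc]; exact hmono
  have e5 : (1-x) * (∫ t in b..x, (((1-t^2)^2)⁻¹:ℝ)) ≤ (1 - x^2) * ∫ t in b..x, (((1-t^2)^2)⁻¹:ℝ) := by
    apply mul_le_mul_of_nonneg_right _ hpos
    nlinarith
  linarith

/-! ### LocACOn infrastructure -/

lemma uIcc_subset_Ioo {b x : ℝ} (hb : b ∈ Ioo (-1:ℝ) 1) (hx : x ∈ Ioo (-1:ℝ) 1) :
    uIcc b x ⊆ Ioo (-1:ℝ) 1 := by
  rw [uIcc]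
  rintro t ⟨h1, h2⟩
  constructor
  · calc (-1:ℝ) < min b x := lt_min hb.1 hx.1
      _ ≤ t := h1
  · calc t ≤ max b x := h2
      _ < 1 := max_lt hb.2 hx.2

lemma LocACOn.continuousOn {g g' : ℝ → ℂ} (hg : LocACOn g g') :
    ContinuousOn g (Ioo (-1:ℝ) 1) := by
  apply continuousOn_of_forall_continuousAt
  intro x₀ hx₀
  set a : ℝ := (x₀ + -1)/2 with ha_def
  set b : ℝ := (x₀ + 1)/2 with hb_def
  have hax : a < x₀ := by rw [ha_def]; linarith [hx₀.1]
  have hxb : x₀ < b := by rw [hb_def]; linarith [hx₀.2]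
  have haI : a ∈ Ioo (-1:ℝ) 1 := ⟨by rw [ha_def]; linarith [hx₀.1], by rw [ha_def]; linarith [hx₀.1, hx₀.2]⟩
  have hbI : b ∈ Ioo (-1:ℝ) 1 := ⟨by rw [hb_def]; linarith [hx₀.1, hx₀.2], by rw [hb_def]; linarith [hx₀.2]⟩
  have hint : IntervalIntegrable g' volume a b := (hg a haI b hbI).1
  have hx₀m : x₀ ∈ uIcc a b := by
    rw [uIcc_of_le (by linarith)]
    exact ⟨hax.le, hxb.le⟩
  have hcont : ContinuousOn (fun y => g x₀ + ∫ t in x₀..y, g' t) (uIcc a b) :=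
    continuousOn_const.add (intervalIntegral.continuousOn_primitive_interval' hint hx₀m)
  have hmem : uIcc a b ∈ nhds x₀ := by
    rw [uIcc_of_le (by linarith)]
    exact Icc_mem_nhds hax hxb
  have hca : ContinuousAt (fun y => g x₀ + ∫ t in x₀..y, g' t) x₀ :=
    (hcont.continuousAt hmem)
  apply hca.congr
  have hIoo : Ioo (-1:ℝ) 1 ∈ nhds x₀ := isOpen_Ioo.mem_nhds hx₀
  filter_upwards [hIoo] with y hy
  have := (hg x₀ hx₀ y hy).2
  linear_combination -this

lemma LocACOn.hasDerivAt {g g' : ℝ → ℂ} (hg : LocACOn g g')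
    (hg' : ContinuousOn g' (Ioo (-1:ℝ) 1)) :
    ∀ x ∈ Ioo (-1:ℝ) 1, HasDerivAt g (g' x) x := by
  intro x₀ hx₀
  have hmeas : StronglyMeasurableAtFilter g' (nhds x₀) volume :=
    hg'.stronglyMeasurableAtFilter isOpen_Ioo x₀ hx₀
  have hca : ContinuousAt g' x₀ := hg'.continuousAt (isOpen_Ioo.mem_nhds hx₀)
  have hprim : HasDerivAt (fun y => ∫ t in x₀..y, g' t) (g' x₀) x₀ :=
    intervalIntegral.integral_hasDerivAt_right (hg x₀ hx₀ x₀ hx₀).1 hmeas hca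
  have : HasDerivAt (fun y => g x₀ + ∫ t in x₀..y, g' t) (g' x₀) x₀ := hprim.const_add _
  apply this.congr_of_eventuallyEq
  have hIoo : Ioo (-1:ℝ) 1 ∈ nhds x₀ := isOpen_Ioo.mem_nhds hx₀
  filter_upwards [hIoo] with y hy
  have := (hg x₀ hx₀ y hy).2
  linear_combination this

lemma one_sub_sq_pos {t : ℝ} (ht : t ∈ Ioo (-1:ℝ) 1) : 0 < 1 - t^2 := by
  nlinarith [ht.1, ht.2]

lemma norm_real_mul {r : ℝ} (hr : 0 ≤ r) (z : ℂ) : ‖(r:ℂ) * z‖ = r * ‖z‖ := by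
  rw [norm_mul, Complex.norm_real, Real.norm_eq_abs, abs_of_nonneg hr]

lemma tendsto_w_atOne (f f1 : ℝ → ℂ)
    (hf : LocACOn f f1) (f1c : ContinuousOn f1 (Ioo (-1:ℝ) 1))
    (hv : Tendsto (fun x => ((1 - x^2 : ℝ) : ℂ) * f1 x) atOne (nhds 0)) :
    Tendsto (fun x => ((1 - x^2 : ℝ) : ℂ) * f x) atOne (nhds 0) := by
  apply tendsto_atOne_of_bound
  intro ε hε
  have hε2 : 0 < ε/2 := by linarith
  obtain ⟨b₀, hb₀0, hb₀1, hP⟩ := exists_Ioo_of_eventually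
    (NormedAddCommGroup.tendsto_nhds_zero.mp hv (ε/2) hε2)
  set b := (b₀ + 1)/2 with hbdef
  have hb₀b : b₀ < b := by rw [hbdef]; linarith
  have hb1 : b < 1 := by rw [hbdef]; linarith
  have hb0 : 0 ≤ b := by rw [hbdef]; linarith
  have hbI : b ∈ Ioo (-1:ℝ) 1 := ⟨by linarith, hb1⟩
  refine ⟨b, ‖f b‖, hb1, ?_⟩
  intro x hx
  have hxI : x ∈ Ioo (-1:ℝ) 1 := ⟨by linarith [hx.1], hx.2⟩
  have hbx : b ≤ x := hx.1.le
  have hsub := uIcc_subset_Ioo hbI hxI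
  have hx2 : 0 ≤ 1 - x^2 := (one_sub_sq_pos hxI).le
  have hid := (hf b hbI x hxI).2
  have hbd : ∫ t in b..x, ‖f1 t‖ ≤ ∫ t in b..x, (ε/2) * (1-t)⁻¹ := by
    apply intervalIntegral.integral_mono_on hbx
    · exact ((f1c.mono hsub).norm).intervalIntegrable
    · apply ContinuousOn.intervalIntegrable
      apply ContinuousOn.mul continuousOn_const
      apply ContinuousOn.inv₀ (by fun_prop)
      intro t ht
      rw [uIcc_of_le hbx] at ht
      intro h'
      nlinarith [ht.2, hx.2]
    · intro t ht
      have htI : t ∈ Ioo (-1:ℝ) 1 := hsub (by rw [uIcc_of_le hbx]; exact ht)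
      have ht2pos := one_sub_sq_pos htI
      have hvt : ‖((1 - t^2 : ℝ):ℂ) * f1 t‖ < ε/2 :=
        hP t ⟨lt_of_lt_of_le hb₀b ht.1, lt_of_le_of_lt ht.2 hx.2⟩
      rw [norm_real_mul ht2pos.le] at hvt
      have h0t : 0 ≤ t := le_trans hb0 ht.1
      have h1t : 0 < 1 - t := by linarith [htI.2]
      have hle1 : (1-t) ≤ (1-t^2) := by nlinarith
      have h2 : ‖f1 t‖ * (1-t) ≤ ε/2 := by nlinarith [norm_nonneg (f1 t)]
      calc ‖f1 t‖ = ‖f1 t‖ * (1-t) * (1-t)⁻¹ := by field_simp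
        _ ≤ ε/2 * (1-t)⁻¹ := mul_le_mul_of_nonneg_right h2 (by positivity)
  have hnormint : ‖∫ t in b..x, f1 t‖ ≤ ∫ t in b..x, ‖f1 t‖ :=
    intervalIntegral.norm_integral_le_integral_norm hbx
  have hestB : (1 - x^2) * ∫ t in b..x, (1-t)⁻¹ ≤ 2 := estB hb0 hbx hx.2
  have hconst : ∫ t in b..x, ((ε/2) * (1-t)⁻¹) = (ε/2) * ∫ t in b..x, (1-t)⁻¹ :=
    intervalIntegral.integral_const_mul _ _
  have hintnn : 0 ≤ ∫ t in b..x, ‖f1 t‖ :=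
    intervalIntegral.integral_nonneg hbx (fun t _ => norm_nonneg _)
  calc ‖((1 - x^2:ℝ):ℂ) * f x‖ = (1-x^2) * ‖f x‖ := norm_real_mul hx2 _
    _ ≤ (1-x^2) * (‖f b‖ + ‖∫ t in b..x, f1 t‖) := by
        apply mul_le_mul_of_nonneg_left _ hx2
        have h3 : f x = f b + ∫ t in b..x, f1 t := by linear_combination hid
        rw [h3]; exact norm_add_le _ _
    _ = (1-x^2)*‖f b‖ + (1-x^2) * ‖∫ t in b..x, f1 t‖ := by ring
    _ ≤ (1-x^2)*‖f b‖ + (1-x^2) * ((ε/2) * ∫ t in b..x, (1-t)⁻¹) := by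
        have := le_trans hnormint hbd
        rw [hconst] at this
        exact add_le_add_right (mul_le_mul_of_nonneg_left this hx2) _
    _ = (1-x^2)*‖f b‖ + (ε/2) * ((1-x^2) * ∫ t in b..x, (1-t)⁻¹) := by ring
    _ ≤ (1-x^2)*‖f b‖ + (ε/2) * 2 := by
        apply add_le_add_right
        exact mul_le_mul_of_nonneg_left hestB (by linarith)
    _ ≤ (1-x^2)*‖f b‖ + ε := by linarith

lemma amgm {a B s : ℝ} (hs : 0 < s) : 2*a*B ≤ s⁻¹*a^2 + s*B^2 := by
  have h := sq_nonneg (a - s*B)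
  have e : s⁻¹*a^2 + s*B^2 - 2*a*B = s⁻¹*(a - s*B)^2 := by
    field_simp
    ring
  nlinarith [mul_nonneg (inv_nonneg.mpr hs.le) h]

lemma inv_sq_le {t : ℝ} (h0 : 0 ≤ t) (h1 : t < 1) : ((1-t^2)^2)⁻¹ ≤ ((1-t)^2)⁻¹ :=
  inv_anti₀ (by nlinarith) (by nlinarith)

lemma contOn_cast (g : ℝ → ℝ) (hg : Continuous g) :
    Continuous (fun x : ℝ => ((g x : ℝ) : ℂ)) := Complex.continuous_ofReal.comp hg

lemma tendsto_v_atOne (f f1 f2 : ℝ → ℂ) (K : ℝ)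
    (hf1 : LocACOn f1 f2)
    (fc : ContinuousOn f (Ioo (-1:ℝ) 1)) (f2c : ContinuousOn f2 (Ioo (-1:ℝ) 1))
    (hK : ∀ b x : ℝ, b ∈ Ioo (-1:ℝ) 1 → x ∈ Ioo (-1:ℝ) 1 → b ≤ x →
      (∫ t in b..x, ‖f t‖^2) ≤ K)
    (hh : Tendsto (fun x => ((2*(1 - x^2) : ℝ) : ℂ) * f x - (((1 - x^2)^2 : ℝ) : ℂ) * f2 x)
      atOne (nhds 0)) :
    Tendsto (fun x => ((1 - x^2 : ℝ) : ℂ) * f1 x) atOne (nhds 0) := by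
  set h : ℝ → ℂ := fun x => ((2*(1 - x^2) : ℝ) : ℂ) * f x - (((1 - x^2)^2 : ℝ) : ℂ) * f2 x
    with hhdef
  have hccont : Continuous (fun t : ℝ => ((((1 - t^2)^2 : ℝ)):ℂ)) := by
    apply contOn_cast; fun_prop
  have hhc : ContinuousOn h (Ioo (-1:ℝ) 1) := by
    apply ContinuousOn.sub
    · exact ((contOn_cast _ (by fun_prop)).continuousOn).mul fc
    · exact ((contOn_cast _ (by fun_prop)).continuousOn).mul f2c
  apply tendsto_atOne_of_bound
  intro ε hε
  have hε4 : 0 < ε/4 := by linarith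
  obtain ⟨b₀, hb₀0, hb₀1, hP⟩ := exists_Ioo_of_eventually
    (NormedAddCommGroup.tendsto_nhds_zero.mp hh (ε/4) hε4)
  set b := (b₀ + 1)/2 with hbdef
  have hb₀b : b₀ < b := by rw [hbdef]; linarith
  have hb1 : b < 1 := by rw [hbdef]; linarith
  have hb0 : 0 ≤ b := by rw [hbdef]; linarith
  have hbI : b ∈ Ioo (-1:ℝ) 1 := ⟨by linarith, hb1⟩
  refine ⟨b, ‖f1 b‖ + (ε/4)⁻¹ * K, hb1, ?_⟩
  intro x hx
  have hxI : x ∈ Ioo (-1:ℝ) 1 := ⟨by linarith [hx.1], hx.2⟩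
  have hbx : b ≤ x := hx.1.le
  have hsub := uIcc_subset_Ioo hbI hxI
  have hx2 : 0 ≤ 1 - x^2 := (one_sub_sq_pos hxI).le
  have hid := (hf1 b hbI x hxI).2
  have hcne : ∀ t ∈ uIcc b x, ((((1 - t^2)^2 : ℝ)):ℂ) ≠ 0 := by
    intro t ht
    have htI := hsub ht
    exact Complex.ofReal_ne_zero.mpr (pow_ne_zero 2 (one_sub_sq_pos htI).ne')
  -- pointwise identity for f2 and split of the integral
  have hcongr : ∫ t in b..x, f2 t
      = ∫ t in b..x, (((2*(1 - t^2) : ℝ) : ℂ) * f t * ((((1 - t^2)^2 : ℝ)):ℂ)⁻¹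
          - h t * ((((1 - t^2)^2 : ℝ)):ℂ)⁻¹) := by
    apply intervalIntegral.integral_congr
    intro t ht
    have h0' : ((1:ℂ) - (t:ℂ)^2) ≠ 0 := by
      have := Complex.ofReal_ne_zero.mpr (one_sub_sq_pos (hsub ht)).ne'
      push_cast at this
      exact this
    rw [hhdef]
    push_cast
    field_simp
    ring
  have hcic : ContinuousOn (fun t : ℝ => ((((1 - t^2)^2 : ℝ)):ℂ)⁻¹) (Ioo (-1:ℝ) 1) := by
    apply ContinuousOn.inv₀ hccont.continuousOn
    intro t ht
    exact Complex.ofReal_ne_zero.mpr (pow_ne_zero 2 (one_sub_sq_pos ht).ne')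
  have hint1 : IntervalIntegrable
      (fun t => ((2*(1 - t^2) : ℝ) : ℂ) * f t * ((((1 - t^2)^2 : ℝ)):ℂ)⁻¹) volume b x := by
    apply ContinuousOn.intervalIntegrable
    exact (((contOn_cast _ (by fun_prop)).continuousOn.mono hsub).mul (fc.mono hsub)).mul
      (hcic.mono hsub)
  have hint2 : IntervalIntegrable (fun t => h t * ((((1 - t^2)^2 : ℝ)):ℂ)⁻¹) volume b x := by
    apply ContinuousOn.intervalIntegrable
    exact ((hhc.mono hsub)).mul (hcic.mono hsub)
  have hsplit : ∫ t in b..x, f2 t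
      = (∫ t in b..x, ((2*(1 - t^2) : ℝ) : ℂ) * f t * ((((1 - t^2)^2 : ℝ)):ℂ)⁻¹)
        - ∫ t in b..x, h t * ((((1 - t^2)^2 : ℝ)):ℂ)⁻¹ := by
    rw [hcongr, intervalIntegral.integral_sub hint1 hint2]
  -- bound on the first integral
  have hgint : IntervalIntegrable (fun t : ℝ => (ε/4)⁻¹ * ‖f t‖^2 + (ε/4) * ((1-t)^2)⁻¹)
      volume b x := by
    apply ContinuousOn.intervalIntegrable
    apply ContinuousOn.add
    · exact continuousOn_const.mul (((fc.mono hsub).norm).pow 2)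
    · apply continuousOn_const.mul
      apply ContinuousOn.inv₀ (by fun_prop)
      intro t ht
      have htI := hsub ht
      intro h'
      nlinarith [htI.2]
  have hB1 : ‖∫ t in b..x, ((2*(1 - t^2) : ℝ) : ℂ) * f t * ((((1 - t^2)^2 : ℝ)):ℂ)⁻¹‖
      ≤ ∫ t in b..x, ((ε/4)⁻¹ * ‖f t‖^2 + (ε/4) * ((1-t)^2)⁻¹) := by
    refine le_trans (intervalIntegral.norm_integral_le_integral_norm hbx) ?_
    apply intervalIntegral.integral_mono_on hbx
    · apply ContinuousOn.intervalIntegrable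
      exact ((((contOn_cast _ (by fun_prop)).continuousOn.mono hsub).mul (fc.mono hsub)).mul
        (hcic.mono hsub)).norm
    · exact hgint
    · intro t ht
      have htm : t ∈ uIcc b x := by rw [uIcc_of_le hbx]; exact ht
      have htI := hsub htm
      have hy : 0 < 1 - t^2 := one_sub_sq_pos htI
      have h0t : 0 ≤ t := le_trans hb0 ht.1
      have h1t : t < 1 := htI.2
      have hA := amgm (a := ‖f t‖) (B := (1-t^2)⁻¹) hε4
      have hBB : (ε/4) * ((1-t^2)⁻¹)^2 ≤ (ε/4) * ((1-t)^2)⁻¹ := by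
        apply mul_le_mul_of_nonneg_left _ hε4.le
        rw [inv_pow]
        exact inv_sq_le h0t h1t
      calc ‖((2*(1 - t^2) : ℝ) : ℂ) * f t * ((((1 - t^2)^2 : ℝ)):ℂ)⁻¹‖
          = 2 * (1-t^2) * ‖f t‖ * ((1-t^2)^2)⁻¹ := by
            rw [norm_mul, norm_inv, norm_real_mul (by linarith : (0:ℝ) ≤ 2*(1-t^2)) (f t),
              Complex.norm_real, Real.norm_eq_abs,
              abs_of_nonneg (by positivity : (0:ℝ) ≤ (1-t^2)^2)]
        _ = 2 * ‖f t‖ * (1-t^2)⁻¹ := by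
            field_simp [hy.ne']
        _ ≤ (ε/4)⁻¹*‖f t‖^2 + (ε/4)*((1-t^2)⁻¹)^2 := hA
        _ ≤ (ε/4)⁻¹*‖f t‖^2 + (ε/4)*((1-t)^2)⁻¹ := by linarith
  -- bound on the second integral
  have hB2 : ‖∫ t in b..x, h t * ((((1 - t^2)^2 : ℝ)):ℂ)⁻¹‖
      ≤ ∫ t in b..x, ((ε/4) * ((1-t)^2)⁻¹) := by
    refine le_trans (intervalIntegral.norm_integral_le_integral_norm hbx) ?_
    apply intervalIntegral.integral_mono_on hbx
    · apply ContinuousOn.intervalIntegrable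
      exact ((hhc.mono hsub).mul (hcic.mono hsub)).norm
    · apply ContinuousOn.intervalIntegrable
      apply continuousOn_const.mul
      apply ContinuousOn.inv₀ (by fun_prop)
      intro t ht
      have htI := hsub ht
      intro h'
      nlinarith [htI.2]
    · intro t ht
      have htm : t ∈ uIcc b x := by rw [uIcc_of_le hbx]; exact ht
      have htI := hsub htm
      have hy : 0 < 1 - t^2 := one_sub_sq_pos htI
      have h0t : 0 ≤ t := le_trans hb0 ht.1
      have hht : ‖h t‖ < ε/4 := hP t ⟨lt_of_lt_of_le hb₀b ht.1, lt_of_le_of_lt ht.2 hx.2⟩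
      rw [norm_mul, norm_inv, Complex.norm_real, Real.norm_eq_abs, abs_of_nonneg (by positivity)]
      calc ‖h t‖ * ((1-t^2)^2)⁻¹ ≤ (ε/4) * ((1-t^2)^2)⁻¹ :=
            mul_le_mul_of_nonneg_right hht.le (by positivity)
        _ ≤ (ε/4) * ((1-t)^2)⁻¹ := mul_le_mul_of_nonneg_left (inv_sq_le h0t htI.2) hε4.le
  -- integral computations
  have hsum : ∫ t in b..x, ((ε/4)⁻¹ * ‖f t‖^2 + (ε/4) * ((1-t)^2)⁻¹)
      = (ε/4)⁻¹ * (∫ t in b..x, ‖f t‖^2) + (ε/4) * ∫ t in b..x, ((1-t)^2)⁻¹ := by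
    rw [intervalIntegral.integral_add, intervalIntegral.integral_const_mul,
      intervalIntegral.integral_const_mul]
    · apply ContinuousOn.intervalIntegrable
      exact continuousOn_const.mul (((fc.mono hsub).norm).pow 2)
    · apply ContinuousOn.intervalIntegrable
      apply continuousOn_const.mul
      apply ContinuousOn.inv₀ (by fun_prop)
      intro t ht
      have htI := hsub ht
      intro h'
      nlinarith [htI.2]
  have hconst2 : ∫ t in b..x, ((ε/4) * ((1-t)^2)⁻¹) = (ε/4) * ∫ t in b..x, ((1-t)^2)⁻¹ :=
    intervalIntegral.integral_const_mul _ _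
  have hestA : (1 - x^2) * ∫ t in b..x, ((1-t)^2)⁻¹ ≤ 2 := estA hb0 hbx hx.2
  have hKb : (∫ t in b..x, ‖f t‖^2) ≤ K := hK b x hbI hxI hbx
  have hinv_nn : 0 ≤ ∫ t in b..x, ((1-t)^2)⁻¹ :=
    intervalIntegral.integral_nonneg hbx (fun t _ => by positivity)
  -- final assembly
  have hfin : f1 x = f1 b + ((∫ t in b..x, ((2*(1 - t^2) : ℝ) : ℂ) * f t * ((((1 - t^2)^2 : ℝ)):ℂ)⁻¹)
      - ∫ t in b..x, h t * ((((1 - t^2)^2 : ℝ)):ℂ)⁻¹) := by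
    rw [← hsplit]; linear_combination hid
  calc ‖((1 - x^2:ℝ):ℂ) * f1 x‖ = (1-x^2) * ‖f1 x‖ := norm_real_mul hx2 _
    _ ≤ (1-x^2) * (‖f1 b‖
        + (‖∫ t in b..x, ((2*(1 - t^2) : ℝ) : ℂ) * f t * ((((1 - t^2)^2 : ℝ)):ℂ)⁻¹‖
        + ‖∫ t in b..x, h t * ((((1 - t^2)^2 : ℝ)):ℂ)⁻¹‖)) := by
        apply mul_le_mul_of_nonneg_left _ hx2
        rw [hfin]
        exact le_trans (norm_add_le _ _) (by gcongr; exact norm_sub_le _ _)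
    _ ≤ (1-x^2) * ‖f1 b‖ + (1-x^2) * ((ε/4)⁻¹ * (∫ t in b..x, ‖f t‖^2)
          + (ε/4) * ∫ t in b..x, ((1-t)^2)⁻¹)
        + (1-x^2) * ((ε/4) * ∫ t in b..x, ((1-t)^2)⁻¹) := by
        have e1 := le_trans hB1 (le_of_eq hsum)
        have e2 := le_trans hB2 (le_of_eq hconst2)
        nlinarith [norm_nonneg (∫ t in b..x, ((2*(1 - t^2) : ℝ) : ℂ) * f t * ((((1 - t^2)^2 : ℝ)):ℂ)⁻¹),
          norm_nonneg (∫ t in b..x, h t * ((((1 - t^2)^2 : ℝ)):ℂ)⁻¹)]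
    _ ≤ (1-x^2) * ‖f1 b‖ + ((1-x^2) * ((ε/4)⁻¹ * K) + (ε/4) * 2) + (ε/4) * 2 := by
        have e3 : (1-x^2) * ((ε/4) * ∫ t in b..x, ((1-t)^2)⁻¹) ≤ (ε/4) * 2 := by
          have : (1-x^2) * ((ε/4) * ∫ t in b..x, ((1-t)^2)⁻¹)
              = (ε/4) * ((1-x^2) * ∫ t in b..x, ((1-t)^2)⁻¹) := by ring
          rw [this]
          exact mul_le_mul_of_nonneg_left hestA hε4.le
        have e4 : (1-x^2) * ((ε/4)⁻¹ * (∫ t in b..x, ‖f t‖^2)) ≤ (1-x^2) * ((ε/4)⁻¹ * K) := by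
          apply mul_le_mul_of_nonneg_left _ hx2
          exact mul_le_mul_of_nonneg_left hKb (by positivity)
        have e5 : (1-x^2) * ((ε/4)⁻¹ * (∫ t in b..x, ‖f t‖^2)
            + (ε/4) * ∫ t in b..x, ((1-t)^2)⁻¹)
            ≤ (1-x^2) * ((ε/4)⁻¹ * K) + (ε/4) * 2 := by
          rw [mul_add]
          apply add_le_add e4
          have : (1-x^2) * ((ε/4) * ∫ t in b..x, ((1-t)^2)⁻¹)
              = (ε/4) * ((1-x^2) * ∫ t in b..x, ((1-t)^2)⁻¹) := by ring
          rw [this]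
          exact mul_le_mul_of_nonneg_left hestA hε4.le
        linarith
    _ ≤ (1 - x^2) * (‖f1 b‖ + (ε/4)⁻¹ * K) + ε := by ring_nf; linarith

lemma sqTermD_contOn {f2 f3 : ℝ → ℂ} (f2c : ContinuousOn f2 (Ioo (-1:ℝ) 1))
    (f3c : ContinuousOn f3 (Ioo (-1:ℝ) 1)) :
    ContinuousOn (sqTermD f2 f3) (Ioo (-1:ℝ) 1) := by
  apply ContinuousOn.sub
  · exact ((contOn_cast _ (by fun_prop)).continuousOn).mul f3c
  · exact ((contOn_cast _ (by fun_prop)).continuousOn).mul f2c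

lemma u_sub_integral {f2 f3 : ℝ → ℂ} (hf2 : LocACOn f2 f3)
    (f3c : ContinuousOn f3 (Ioo (-1:ℝ) 1)) {b x : ℝ}
    (hb : b ∈ Ioo (-1:ℝ) 1) (hx : x ∈ Ioo (-1:ℝ) 1) :
    (((1 - x^2)^2 : ℝ) : ℂ) * f2 x - (((1 - b^2)^2 : ℝ) : ℂ) * f2 b
      = ∫ t in b..x, sqTermD f2 f3 t := by
  have hsub := uIcc_subset_Ioo hb hx
  have hderiv : ∀ t ∈ uIcc b x,
      HasDerivAt (fun t => (((1 - t^2)^2 : ℝ) : ℂ) * f2 t) (sqTermD f2 f3 t) t := by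
    intro t ht
    have htI := hsub ht
    have h0 : HasDerivAt (fun s : ℝ => 1 - s^2) (-(2*t)) t := by
      simpa using (hasDerivAt_pow 2 t).const_sub 1
    have h1 := h0.pow 2
    have h2 := h1.ofReal_comp
    have h3 := h2.mul (hf2.hasDerivAt f3c t htI)
    refine h3.congr_deriv ?_
    simp only [sqTermD, Pi.pow_apply]
    push_cast
    ring
  have hint : IntervalIntegrable (sqTermD f2 f3) volume b x :=
    ((sqTermD_contOn hf2.continuousOn f3c).mono hsub).intervalIntegrable
  exact (intervalIntegral.integral_eq_sub_of_hasDerivAt hderiv hint).symm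

lemma tendsto_u_atOne (f1 f2 f3 : ℝ → ℂ)
    (hf1 : LocACOn f1 f2) (hf2 : LocACOn f2 f3) (f3c : ContinuousOn f3 (Ioo (-1:ℝ) 1))
    (hv : Tendsto (fun x => ((1 - x^2 : ℝ) : ℂ) * f1 x) atOne (nhds 0))
    (hs : Tendsto (sqTermD f2 f3) atOne (nhds 0)) :
    Tendsto (fun x => (((1 - x^2)^2 : ℝ) : ℂ) * f2 x) atOne (nhds 0) := by
  set u : ℝ → ℂ := fun t => (((1 - t^2)^2 : ℝ) : ℂ) * f2 t with hudef
  have f2c : ContinuousOn f2 (Ioo (-1:ℝ) 1) := hf2.continuousOn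
  have uc : ContinuousOn u (Ioo (-1:ℝ) 1) :=
    ((contOn_cast _ (by fun_prop)).continuousOn).mul f2c
  apply tendsto_atOne_of_bound
  intro ε hε
  set ε' := ε/24 with hε'def
  have hε' : 0 < ε' := by rw [hε'def]; linarith
  obtain ⟨b₀, hb₀0, hb₀1, hP⟩ := exists_Ioo_of_eventually
    ((NormedAddCommGroup.tendsto_nhds_zero.mp hs ε' hε').and
     (NormedAddCommGroup.tendsto_nhds_zero.mp hv ε' hε'))
  set b := (b₀ + 1)/2 with hbdef
  set b₂ := (b + 1)/2 with hb₂def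
  have hb₀b : b₀ < b := by rw [hbdef]; linarith
  have hb1 : b < 1 := by rw [hbdef]; linarith
  have hb0 : 0 ≤ b := by rw [hbdef]; linarith
  have hbb₂ : b < b₂ := by rw [hb₂def]; linarith
  have hb₂1 : b₂ < 1 := by rw [hb₂def]; linarith
  have hbI : b ∈ Ioo (-1:ℝ) 1 := ⟨by linarith, hb1⟩
  refine ⟨b₂, 8*‖f1 b‖, hb₂1, ?_⟩
  intro x hx
  have hxI : x ∈ Ioo (-1:ℝ) 1 := ⟨by linarith [hx.1], hx.2⟩
  have hbx : b ≤ x := by linarith [hx.1]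
  have hsub := uIcc_subset_Ioo hbI hxI
  have hx2 : 0 ≤ 1 - x^2 := (one_sub_sq_pos hxI).le
  have hclose : 1 - x ≤ (1-b)/2 := by
    have := hx.1
    rw [hb₂def] at this
    linarith
  set I₁ : ℝ := ∫ t in b..x, ((1-t^2)^2)⁻¹ with hI₁def
  set J : ℂ := ∫ t in b..x, (u x - u t) * ((((1-t^2)^2 : ℝ)):ℂ)⁻¹ with hJdef
  have hcic : ContinuousOn (fun t : ℝ => ((((1 - t^2)^2 : ℝ)):ℂ)⁻¹) (Ioo (-1:ℝ) 1) := by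
    apply ContinuousOn.inv₀ ((contOn_cast _ (by fun_prop)).continuousOn)
    intro t ht
    exact Complex.ofReal_ne_zero.mpr (pow_ne_zero 2 (one_sub_sq_pos ht).ne')
  -- split the representation of ∫ f2
  have hint1 : IntervalIntegrable (fun t => u x * ((((1-t^2)^2 : ℝ)):ℂ)⁻¹) volume b x :=
    (continuousOn_const.mul (hcic.mono hsub)).intervalIntegrable
  have hint2 : IntervalIntegrable (fun t => (u x - u t) * ((((1-t^2)^2 : ℝ)):ℂ)⁻¹) volume b x :=
    (((continuousOn_const.sub (uc.mono hsub))).mul (hcic.mono hsub)).intervalIntegrable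
  have hcongr : ∫ t in b..x, f2 t
      = ∫ t in b..x, (u x * ((((1-t^2)^2 : ℝ)):ℂ)⁻¹
          - (u x - u t) * ((((1-t^2)^2 : ℝ)):ℂ)⁻¹) := by
    apply intervalIntegral.integral_congr
    intro t ht
    have htI := hsub ht
    have h0' : ((1:ℂ) - (t:ℂ)^2) ≠ 0 := by
      have := Complex.ofReal_ne_zero.mpr (one_sub_sq_pos htI).ne'
      push_cast at this
      exact this
    rw [hudef]
    push_cast
    field_simp
    ring
  have hcast : (∫ t in b..x, ((((1-t^2)^2 : ℝ)):ℂ)⁻¹) = ((I₁ : ℝ) : ℂ) := by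
    rw [hI₁def, ← intervalIntegral.integral_ofReal]
    apply intervalIntegral.integral_congr
    intro t ht
    norm_cast
  have hsplit : ∫ t in b..x, f2 t = u x * ((I₁ : ℝ) : ℂ) - J := by
    rw [hcongr, intervalIntegral.integral_sub hint1 hint2, hJdef,
      intervalIntegral.integral_const_mul, hcast]
  -- main identity
  have hid := (hf1 b hbI x hxI).2
  rw [hsplit] at hid
  have hmain : u x * ((((1 - x^2) * I₁ : ℝ)):ℂ)
      = ((1-x^2:ℝ):ℂ) * f1 x - ((1-x^2:ℝ):ℂ) * f1 b + ((1-x^2:ℝ):ℂ) * J := by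
    rw [Complex.ofReal_mul]
    simp only [hudef] at hid ⊢
    linear_combination (-(((1 - x^2 : ℝ)) : ℂ)) * hid
  -- bound for J
  have hJb : ‖J‖ ≤ ∫ t in b..x, (ε' * (1-t)⁻¹) := by
    rw [hJdef]
    refine le_trans (intervalIntegral.norm_integral_le_integral_norm hbx) ?_
    apply intervalIntegral.integral_mono_on hbx
    · exact ((((continuousOn_const.sub (uc.mono hsub))).mul (hcic.mono hsub)).norm).intervalIntegrable
    · apply ContinuousOn.intervalIntegrable
      apply continuousOn_const.mul
      apply ContinuousOn.inv₀ (by fun_prop)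
      intro t ht
      rw [uIcc_of_le hbx] at ht
      intro h'
      nlinarith [ht.2, hx.2]
    · intro t ht
      have htm : t ∈ uIcc b x := by rw [uIcc_of_le hbx]; exact ht
      have htI := hsub htm
      have hy : 0 < 1 - t^2 := one_sub_sq_pos htI
      have h0t : 0 ≤ t := le_trans hb0 ht.1
      have h1t : 0 < 1 - t := by linarith [htI.2]
      -- ‖u x - u t‖ ≤ ε' * (x - t)
      have hftc : u x - u t = ∫ s in t..x, sqTermD f2 f3 s := by
        have e1 := u_sub_integral hf2 f3c htI hxI
        have e2 := u_sub_integral hf2 f3c hbI hxI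
        rw [hudef]
        exact e1
      have hut : ‖u x - u t‖ ≤ ε' * (x - t) := by
        rw [hftc]
        have := intervalIntegral.norm_integral_le_of_norm_le_const
          (f := sqTermD f2 f3) (a := t) (b := x) (C := ε') ?_
        · rwa [abs_of_nonneg (by linarith [ht.2] : (0:ℝ) ≤ x - t)] at this
        · intro s hs
          rw [uIoc_of_le (by linarith [ht.2] : t ≤ x)] at hs
          have hsI : s ∈ Ioo b₀ 1 := ⟨by linarith [hs.1, ht.1], by linarith [hs.2, hx.2]⟩
          exact (hP s hsI).1.le
      have hnorm : ‖(u x - u t) * ((((1-t^2)^2 : ℝ)):ℂ)⁻¹‖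
          = ‖u x - u t‖ * ((1-t^2)^2)⁻¹ := by
        rw [norm_mul, norm_inv, Complex.norm_real, Real.norm_eq_abs,
          abs_of_nonneg (by positivity : (0:ℝ) ≤ (1-t^2)^2)]
      rw [hnorm]
      have hstep : (x - t) * ((1-t^2)^2)⁻¹ ≤ (1-t)⁻¹ := by
        calc (x - t) * ((1-t^2)^2)⁻¹ ≤ (1-t) * ((1-t)^2)⁻¹ := by
              apply mul_le_mul (by linarith [hx.2]) (inv_sq_le h0t htI.2) (by positivity)
                (by linarith)
          _ = (1-t)⁻¹ := by
              rw [pow_two]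
              field_simp
      calc ‖u x - u t‖ * ((1-t^2)^2)⁻¹ ≤ (ε' * (x - t)) * ((1-t^2)^2)⁻¹ :=
            mul_le_mul_of_nonneg_right hut (by positivity)
        _ = ε' * ((x - t) * ((1-t^2)^2)⁻¹) := by ring
        _ ≤ ε' * (1-t)⁻¹ := mul_le_mul_of_nonneg_left hstep hε'.le
  have hJ2 : (1-x^2) * ‖J‖ ≤ 2*ε' := by
    have hc : ∫ t in b..x, (ε' * (1-t)⁻¹) = ε' * ∫ t in b..x, (1-t)⁻¹ :=
      intervalIntegral.integral_const_mul _ _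
    have hestB := estB hb0 hbx hx.2
    calc (1-x^2) * ‖J‖ ≤ (1-x^2) * (ε' * ∫ t in b..x, (1-t)⁻¹) := by
          apply mul_le_mul_of_nonneg_left _ hx2
          rw [← hc]; exact hJb
      _ = ε' * ((1-x^2) * ∫ t in b..x, (1-t)⁻¹) := by ring
      _ ≤ ε' * 2 := mul_le_mul_of_nonneg_left hestB hε'.le
      _ = 2*ε' := by ring
  have hlow : (1:ℝ)/8 ≤ (1-x^2) * I₁ := estLower hb0 hbx hx.2 hclose
  have hvx : ‖((1 - x^2:ℝ):ℂ) * f1 x‖ ≤ ε' :=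
    (hP x ⟨by linarith [hx.1], hx.2⟩).2.le
  have hnn : (0:ℝ) ≤ (1-x^2) * I₁ := le_trans (by norm_num) hlow
  have hnormmain : ‖u x‖ * ((1-x^2) * I₁) ≤ ε' + (1-x^2)*‖f1 b‖ + (1-x^2)*‖J‖ := by
    have e : ‖u x * ((((1 - x^2) * I₁:ℝ)):ℂ)‖ = ‖u x‖ * ((1-x^2) * I₁) := by
      rw [norm_mul, Complex.norm_real, Real.norm_eq_abs, abs_of_nonneg hnn]
    rw [← e, hmain]
    refine le_trans (norm_add_le _ _) ?_
    have e2 : ‖((1-x^2:ℝ):ℂ) * f1 x - ((1-x^2:ℝ):ℂ) * f1 b‖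
        ≤ ε' + (1-x^2)*‖f1 b‖ := by
      refine le_trans (norm_sub_le _ _) ?_
      have := norm_real_mul hx2 (f1 b)
      rw [this]
      exact add_le_add hvx le_rfl
    have e3 : ‖((1-x^2:ℝ):ℂ) * J‖ = (1-x^2)*‖J‖ := norm_real_mul hx2 J
    rw [e3]
    linarith
  have h8 : ‖u x‖ * (1/8) ≤ ‖u x‖ * ((1-x^2) * I₁) :=
    mul_le_mul_of_nonneg_left hlow (norm_nonneg _)
  have hfinal : ‖u x‖ ≤ (1-x^2) * (8*‖f1 b‖) + 24*ε' := by nlinarith [norm_nonneg (u x)]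
  calc ‖u x‖ ≤ (1-x^2) * (8*‖f1 b‖) + 24*ε' := hfinal
    _ = (1-x^2) * (8*‖f1 b‖) + ε := by rw [hε'def]; ring

theorem key (f f1 f2 f3 : ℝ → ℂ) (K : ℝ)
    (hf : LocACOn f f1) (hf1 : LocACOn f1 f2) (hf2 : LocACOn f2 f3)
    (f3c : ContinuousOn f3 (Ioo (-1:ℝ) 1))
    (hK : ∀ b x : ℝ, b ∈ Ioo (-1:ℝ) 1 → x ∈ Ioo (-1:ℝ) 1 → b ≤ x →
      (∫ t in b..x, ‖f t‖^2) ≤ K) :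
    ((Tendsto (fun x => ((1 - x^2 : ℝ) : ℂ) * f1 x) atOne (nhds 0) ∧
      Tendsto (sqTermD f2 f3) atOne (nhds 0)) ↔
     (Tendsto (bket1 f1 f2 f3) atOne (nhds 0) ∧
      Tendsto (bketX f f1 f2 f3) atOne (nhds 0))) := by
  have xc : Tendsto (fun x : ℝ => (x:ℂ)) atOne (nhds 1) := by
    have h : Tendsto (fun x : ℝ => (x:ℂ)) (nhds 1) (nhds ((1:ℝ):ℂ)) :=
      Complex.continuous_ofReal.tendsto 1
    simpa [atOne] using h.mono_left nhdsWithin_le_nhds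
  constructor
  · rintro ⟨hv, hs⟩
    have hb1 : Tendsto (bket1 f1 f2 f3) atOne (nhds 0) := by
      have h2 := hs.sub (hv.const_mul (2:ℂ))
      rw [show (0:ℂ) - (2:ℂ)*0 = 0 by ring] at h2
      refine h2.congr (fun x => ?_)
      simp only [bket1]
      push_cast
      ring
    have hu0 := tendsto_u_atOne f1 f2 f3 hf1 hf2 f3c hv hs
    have hw0 := tendsto_w_atOne f f1 hf hf1.continuousOn hv
    refine ⟨hb1, ?_⟩
    have h3 := ((xc.mul hb1).sub hu0).add (hw0.const_mul (2:ℂ))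
    rw [show (1:ℂ)*0 - 0 + (2:ℂ)*0 = 0 by ring] at h3
    refine h3.congr (fun x => ?_)
    simp only [bketX]
    push_cast
    ring
  · rintro ⟨hb1, hbX⟩
    have hh : Tendsto (fun x => ((2*(1 - x^2) : ℝ) : ℂ) * f x
        - (((1 - x^2)^2 : ℝ) : ℂ) * f2 x) atOne (nhds 0) := by
      have h2 := hbX.sub (xc.mul hb1)
      rw [show (0:ℂ) - (1:ℂ)*0 = 0 by ring] at h2
      refine h2.congr (fun x => ?_)
      simp only [bketX]
      push_cast
      ring
    have hv := tendsto_v_atOne f f1 f2 K hf1 hf.continuousOn hf2.continuousOn hK hh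
    refine ⟨hv, ?_⟩
    have h2 := hb1.add (hv.const_mul (2:ℂ))
    rw [show (0:ℂ) + (2:ℂ)*0 = 0 by ring] at h2
    refine h2.congr (fun x => ?_)
    simp only [bket1]
    push_cast
    ring

/-! ### reflection -/

lemma locACOn_congr {a a' b b' : ℝ → ℂ} (ha : ∀ x, a x = a' x) (hb : ∀ x, b x = b' x)
    (h : LocACOn a b) : LocACOn a' b' := by
  have ea : a = a' := funext ha
  have eb : b = b' := funext hb
  rw [← ea, ← eb]
  exact h

lemma LocACOn.neg {a b : ℝ → ℂ} (h : LocACOn a b) :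
    LocACOn (fun x => -a x) (fun x => -b x) := by
  intro x hx y hy
  obtain ⟨h1, h2⟩ := h x hx y hy
  refine ⟨h1.neg, ?_⟩
  rw [intervalIntegral.integral_neg]
  linear_combination -h2

lemma LocACOn.comp_neg {a b : ℝ → ℂ} (h : LocACOn a b) :
    LocACOn (fun x => a (-x)) (fun x => -b (-x)) := by
  intro x hx y hy
  have hx' : -x ∈ Ioo (-1:ℝ) 1 := ⟨by linarith [hx.2], by linarith [hx.1]⟩
  have hy' : -y ∈ Ioo (-1:ℝ) 1 := ⟨by linarith [hy.2], by linarith [hy.1]⟩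
  obtain ⟨h1, h2⟩ := h (-y) hy' (-x) hx'
  constructor
  · have h3 := (IntervalIntegrable.iff_comp_neg (f := b) (a := -y) (b := -x)).mp h1
    simp only [neg_neg] at h3
    exact h3.symm.neg
  · have e1 : ∫ t in x..y, -b (-t) = -∫ t in x..y, b (-t) := intervalIntegral.integral_neg
    have e2 : ∫ t in x..y, b (-t) = ∫ t in -y..-x, b t := intervalIntegral.integral_comp_neg b
    rw [e1, e2]
    linear_combination -h2

lemma tendsto_neg_atNegOne : Tendsto (fun x : ℝ => -x) atNegOne atOne := by
  rw [atOne, atNegOne, nhdsWithin, nhdsWithin]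
  apply Tendsto.inf
  · have h : Tendsto (fun x : ℝ => -x) (nhds (-1)) (nhds (-(-1):ℝ)) :=
      continuous_neg.tendsto _
    simpa using h
  · rw [tendsto_principal_principal]
    intro x hx
    simp only [Set.mem_Ioo] at hx ⊢
    constructor <;> linarith

lemma tendsto_neg_atOne : Tendsto (fun x : ℝ => -x) atOne atNegOne := by
  rw [atOne, atNegOne, nhdsWithin, nhdsWithin]
  apply Tendsto.inf
  · have h : Tendsto (fun x : ℝ => -x) (nhds 1) (nhds (-1:ℝ)) := continuous_neg.tendsto _
    simpa using h
  · rw [tendsto_principal_principal]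
    intro x hx
    simp only [Set.mem_Ioo] at hx ⊢
    constructor <;> linarith

lemma tendsto_atNegOne_iff {g : ℝ → ℂ} {c : ℂ} :
    Tendsto g atNegOne (nhds c) ↔ Tendsto (fun x => g (-x)) atOne (nhds c) := by
  constructor
  · intro h
    exact h.comp tendsto_neg_atOne
  · intro h
    have h2 := h.comp tendsto_neg_atNegOne
    have e : (fun x => g (-x)) ∘ (fun x : ℝ => -x) = g := by
      funext x
      simp
    rwa [e] at h2

lemma tendsto_neg_zero_iff {g : ℝ → ℂ} {l : Filter ℝ} :
    Tendsto (fun x => -g x) l (nhds 0) ↔ Tendsto g l (nhds 0) :=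
  ⟨fun h => by simpa using h.neg, fun h => by simpa using h.neg⟩

theorem key_neg (f f1 f2 f3 : ℝ → ℂ) (K : ℝ)
    (hf : LocACOn f f1) (hf1 : LocACOn f1 f2) (hf2 : LocACOn f2 f3)
    (f3c : ContinuousOn f3 (Ioo (-1:ℝ) 1))
    (hK : ∀ b x : ℝ, b ∈ Ioo (-1:ℝ) 1 → x ∈ Ioo (-1:ℝ) 1 → b ≤ x →
      (∫ t in b..x, ‖f t‖^2) ≤ K) :
    ((Tendsto (fun x => ((1 - x^2 : ℝ) : ℂ) * f1 x) atNegOne (nhds 0) ∧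
      Tendsto (sqTermD f2 f3) atNegOne (nhds 0)) ↔
     (Tendsto (bket1 f1 f2 f3) atNegOne (nhds 0) ∧
      Tendsto (bketX f f1 f2 f3) atNegOne (nhds 0))) := by
  have hg : LocACOn (fun x => f (-x)) (fun x => -f1 (-x)) := hf.comp_neg
  have hg1 : LocACOn (fun x => -f1 (-x)) (fun x => f2 (-x)) :=
    locACOn_congr (fun x => rfl) (fun x => neg_neg _) hf1.comp_neg.neg
  have hg2 : LocACOn (fun x => f2 (-x)) (fun x => -f3 (-x)) := hf2.comp_neg
  have hmaps : MapsTo (fun x : ℝ => -x) (Ioo (-1:ℝ) 1) (Ioo (-1:ℝ) 1) := by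
    intro x hx
    simp only [Set.mem_Ioo] at hx ⊢
    constructor <;> linarith
  have hg3c : ContinuousOn (fun x => -f3 (-x)) (Ioo (-1:ℝ) 1) :=
    (f3c.comp continuous_neg.continuousOn hmaps).neg
  have hgK : ∀ b x : ℝ, b ∈ Ioo (-1:ℝ) 1 → x ∈ Ioo (-1:ℝ) 1 → b ≤ x →
      (∫ t in b..x, ‖f (-t)‖^2) ≤ K := by
    intro b x hb hx hbx
    have e : (∫ t in b..x, ‖f (-t)‖^2) = ∫ t in -x..-b, ‖f t‖^2 :=
      intervalIntegral.integral_comp_neg (fun t => ‖f t‖^2)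
    rw [e]
    exact hK (-x) (-b) ⟨by linarith [hx.2], by linarith [hx.1]⟩
      ⟨by linarith [hb.2], by linarith [hb.1]⟩ (by linarith)
  have hkey := key (fun x => f (-x)) (fun x => -f1 (-x)) (fun x => f2 (-x))
    (fun x => -f3 (-x)) K hg hg1 hg2 hg3c hgK
  have c1 : Tendsto (fun x => ((1 - x^2 : ℝ) : ℂ) * f1 x) atNegOne (nhds 0)
      ↔ Tendsto (fun x => ((1 - x^2 : ℝ) : ℂ) * (-f1 (-x))) atOne (nhds 0) := by
    rw [tendsto_atNegOne_iff, ← tendsto_neg_zero_iff]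
    apply tendsto_congr
    intro x
    show -(((1 - (-x)^2 : ℝ) : ℂ) * f1 (-x)) = ((1 - x^2 : ℝ) : ℂ) * (-f1 (-x))
    push_cast
    ring
  have c2 : Tendsto (sqTermD f2 f3) atNegOne (nhds 0)
      ↔ Tendsto (sqTermD (fun x => f2 (-x)) (fun x => -f3 (-x))) atOne (nhds 0) := by
    rw [tendsto_atNegOne_iff, ← tendsto_neg_zero_iff]
    apply tendsto_congr
    intro x
    show -(sqTermD f2 f3 (-x)) = sqTermD (fun x => f2 (-x)) (fun x => -f3 (-x)) x
    simp only [sqTermD]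
    push_cast
    ring
  have c3 : Tendsto (bket1 f1 f2 f3) atNegOne (nhds 0)
      ↔ Tendsto (bket1 (fun x => -f1 (-x)) (fun x => f2 (-x)) (fun x => -f3 (-x)))
        atOne (nhds 0) := by
    rw [tendsto_atNegOne_iff, ← tendsto_neg_zero_iff]
    apply tendsto_congr
    intro x
    show -(bket1 f1 f2 f3 (-x))
      = bket1 (fun x => -f1 (-x)) (fun x => f2 (-x)) (fun x => -f3 (-x)) x
    simp only [bket1, sqTermD]
    push_cast
    ring
  have c4 : Tendsto (bketX f f1 f2 f3) atNegOne (nhds 0)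
      ↔ Tendsto (bketX (fun x => f (-x)) (fun x => -f1 (-x)) (fun x => f2 (-x))
        (fun x => -f3 (-x))) atOne (nhds 0) := by
    rw [tendsto_atNegOne_iff]
    apply tendsto_congr
    intro x
    show bketX f f1 f2 f3 (-x)
      = bketX (fun x => f (-x)) (fun x => -f1 (-x)) (fun x => f2 (-x))
        (fun x => -f3 (-x)) x
    simp only [bketX, bket1, sqTermD]
    push_cast
    ring
  rw [c1, c2, c3, c4]
  exact hkey

lemma l2_bound (f : ℝ → ℂ) (h : L2I f) :
    ∃ K : ℝ, ∀ b x : ℝ, b ∈ Ioo (-1:ℝ) 1 → x ∈ Ioo (-1:ℝ) 1 → b ≤ x →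
      (∫ t in b..x, ‖f t‖^2) ≤ K := by
  have hi : Integrable (fun t => ‖f t‖^2) (volume.restrict (Ioo (-1:ℝ) 1)) := by
    have h2 := h.integrable_norm_rpow (by norm_num) (by norm_num)
    have e : (fun x => ‖f x‖ ^ (2:ENNReal).toReal) = fun t => ‖f t‖^2 := by
      funext t
      rw [ENNReal.toReal_ofNat]
      rw [show ((2:ℝ)) = ((2:ℕ):ℝ) by norm_num, Real.rpow_natCast]
    rwa [e] at h2
  refine ⟨(∫ t in Ioo (-1:ℝ) 1, ‖f t‖^2), ?_⟩
  intro b x hb hx hbx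
  rw [intervalIntegral.integral_of_le hbx]
  apply setIntegral_mono_set hi
  · filter_upwards with t
    positivity
  · apply HasSubset.Subset.eventuallyLE
    intro t ht
    exact ⟨lt_of_lt_of_le hb.1 ht.1.le, lt_of_le_of_lt ht.2 hx.2⟩

/-- **Theorem 3 (Littlejohn–Wicks).** `D = D(S)`. -/
theorem D_eq_DS (f f1 f2 f3 f4 : ℝ → ℂ) :
    DDom f f1 f2 f3 f4 ↔ DS f f1 f2 f3 f4 := by
  constructor
  · rintro ⟨hΔ, hv1, hv2, hs1, hs2⟩
    obtain ⟨hf, hf1, hf2, hf3, hL2, hL2sq⟩ := hΔ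
    have f3c : ContinuousOn f3 (Ioo (-1:ℝ) 1) := hf3.continuousOn
    obtain ⟨K, hK⟩ := l2_bound f hL2
    have h1 := (key f f1 f2 f3 K hf hf1 hf2 f3c hK).mp ⟨hv1, hs1⟩
    have h2 := (key_neg f f1 f2 f3 K hf hf1 hf2 f3c hK).mp ⟨hv2, hs2⟩
    exact ⟨⟨hf, hf1, hf2, hf3, hL2, hL2sq⟩, h1.1, h2.1, h1.2, h2.2⟩
  · rintro ⟨hΔ, hb1, hb2, hX1, hX2⟩
    obtain ⟨hf, hf1, hf2, hf3, hL2, hL2sq⟩ := hΔ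
    have f3c : ContinuousOn f3 (Ioo (-1:ℝ) 1) := hf3.continuousOn
    obtain ⟨K, hK⟩ := l2_bound f hL2
    have h1 := (key f f1 f2 f3 K hf hf1 hf2 f3c hK).mpr ⟨hb1, hX1⟩
    have h2 := (key_neg f f1 f2 f3 K hf hf1 hf2 f3c hK).mpr ⟨hb2, hX2⟩
    exact ⟨⟨hf, hf1, hf2, hf3, hL2, hL2sq⟩, h1.1, h2.1, h1.2, h2.2⟩
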